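/- arXiv:1802.04512 — 13 statements merged into one kernel-verified Lean document; each statement's English description precedes it below -/
import Mathlib

section
/- Let ⊴ be the relation on finite sequences of naturals inductively generated by: (η) if a ∈ U then a ⊴ U; (ϝ) if a*n ⊴ U for all n ∈ ℕ, then a ⊴ U. Let ◁ be generated by η, ϝ, and additionally (ζ) if a ≤ b and b ◁ U then a ◁ U, where a ≤ b means b is an initial segment of a. Then a ◁ U if and only if a ⊴ ↓U, where ↓U is the downward closure of U under ≤. -/
/-- The formal Baire cover, generated by η, ζ, ϝ. -/
inductive BCov : List ℕ → Set (List ℕ) → Prop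
  | eta {a : List ℕ} {U : Set (List ℕ)} : a ∈ U → BCov a U
  | zeta {a b : List ℕ} {U : Set (List ℕ)} : b <+: a → BCov b U → BCov a U
  | digamma {a : List ℕ} {U : Set (List ℕ)} : (∀ n : ℕ, BCov (a ++ [n]) U) → BCov a U

/-- The ζ-free cover, generated by η and ϝ only. -/
inductive BCov0 : List ℕ → Set (List ℕ) → Prop
  | eta {a : List ℕ} {U : Set (List ℕ)} : a ∈ U → BCov0 a U
  | digamma {a : List ℕ} {U : Set (List ℕ)} : (∀ n : ℕ, BCov0 (a ++ [n]) U) → BCov0 a U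

lemma BCov0.mono {b : List ℕ} {V : Set (List ℕ)}
    (hV : ∀ ⦃c d : List ℕ⦄, c ∈ V → c <+: d → d ∈ V)
    (h : BCov0 b V) : ∀ a, b <+: a → BCov0 a V := by
  induction h with
  | eta hb => exact fun a hba => BCov0.eta (hV hb hba)
  | @digamma b _ h ih =>
    intro a hba
    obtain ⟨t, rfl⟩ := hba
    cases t with
    | nil => exact BCov0.digamma fun n => ih n hV _ (by simp)
    | cons n t =>
      exact ih n hV (b ++ n :: t) ⟨t, by simp⟩

lemma BCov0.toBCov {a : List ℕ} {V U : Set (List ℕ)} (h : BCov0 a V)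
    (hVU : ∀ c ∈ V, BCov c U) : BCov a U := by
  induction h with
  | eta hb => exact hVU _ hb
  | digamma _ ih => exact BCov.digamma fun n => ih n hVU

/-- Elimination of the ζ-rule: `a ◁ U` iff `a ⊴ ↓U`. -/
theorem zeta_elimination (a : List ℕ) (U : Set (List ℕ)) :
    BCov a U ↔ BCov0 a {c : List ℕ | ∃ b ∈ U, b <+: c} := by
  constructor
  · intro h
    induction h with
    | eta hb => exact BCov0.eta ⟨_, hb, List.prefix_rfl⟩
    | zeta hba _ ih =>
      refine ih.mono (fun c d hc hcd => ?_) _ hba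
      obtain ⟨e, he, hec⟩ := hc
      exact ⟨e, he, hec.trans hcd⟩
    | digamma _ ih => exact BCov0.digamma ih
  · intro h
    exact h.toBCov fun c hc => by
      obtain ⟨b, hb, hba⟩ := hc; exact BCov.zeta hba (BCov.eta hb)
end

section
/- Let ◁ be the formal Baire cover on finite sequences of naturals (generated by reflexivity, leftward closure under the prefix order, and the rule: if a*n ◁ U for all n then a ◁ U). Then for all finite sequences a, b: a ◁ {b} if and only if b is an initial segment of a. -/
/-- `a ◁ {b}` iff `b` is an initial segment of `a`. -/
theorem cov_singleton_iff_prefix (a b : List ℕ) :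
    BCov a ({b} : Set (List ℕ)) ↔ b <+: a := by
  constructor
  · intro h
    generalize hU : ({b} : Set (List ℕ)) = U at h
    induction h with
    | eta h => subst hU; simp_all
    | zeta hp _ ih => exact (ih hU).trans hp
    | digamma h ih =>
      rename_i a _
      rcases List.prefix_concat_iff.mp (ih 0 hU) with h0 | h0
      · -- b = a ++ [0]
        rcases List.prefix_concat_iff.mp (ih 1 hU) with h1 | h1
        · simp [h0] at h1
        · exact h1
      · exact h0
  · intro h
    exact BCov.zeta h (BCov.eta rfl)
end

section
/- A subset α of ℕ* is an ideal point of the formal Baire space if and only if: (1) α is inhabited; (2) for all a, b ∈ α there exists c ∈ α with c ≤ a and c ≤ b; (3) if a*x ∈ α then a ∈ α; (4) if a ∈ α then there exists x ∈ ℕ with a*x ∈ α. -/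
/-- The greatest positivity compatible with the Baire cover (impredicative definition). -/
def BPos (a : List ℕ) (U : Set (List ℕ)) : Prop :=
  ∃ V : Set (List ℕ), a ∈ V ∧ V ⊆ U ∧
    ∀ W : Set (List ℕ), (∃ b ∈ V, BCov b W) → ∃ b ∈ V, b ∈ W

/-- Ideal points of the formal Baire space: inhabited, filtering, splitting the
cover and entering the positivity. -/
def IsIdealPoint (α : Set (List ℕ)) : Prop :=
  α.Nonempty ∧
  (∀ a b : List ℕ, a ∈ α → b ∈ α →
    ∃ c ∈ α, BCov c ({a} : Set (List ℕ)) ∧ BCov c ({b} : Set (List ℕ))) ∧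
  (∀ (a : List ℕ) (U : Set (List ℕ)), BCov a U → a ∈ α → ∃ b ∈ α, b ∈ U) ∧
  (∀ (a : List ℕ) (V : Set (List ℕ)), a ∈ α → α ⊆ V → BPos a V)


lemma bcov_singleton_iff {a c : List ℕ} : BCov c ({a} : Set (List ℕ)) ↔ a <+: c := by
  constructor
  · intro h
    have gen : ∀ {U : Set (List ℕ)} {c : List ℕ}, BCov c U → (∀ b ∈ U, a <+: b) → a <+: c := by
      intro U c h
      induction h with
      | eta h => exact fun hU => hU _ h
      | zeta hb _ ih => exact fun hU => (ih hU).trans hb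
      | @digamma d _ _ ih =>
          intro hU
          rcases List.prefix_or_prefix_of_prefix (ih 0 hU) (List.prefix_append _ _) with h | h
          · exact h
          · obtain ⟨t, rfl⟩ := h
            have h0 : t <+: [0] := (List.prefix_append_right_inj d).mp (ih 0 hU)
            have h1 : t <+: [1] := (List.prefix_append_right_inj d).mp (ih 1 hU)
            match t, h0, h1 with
            | [], _, _ => simp
            | x :: s, h0, h1 =>
                have e0 : x = 0 := (List.cons_prefix_cons.mp h0).1
                have e1 : x = 1 := (List.cons_prefix_cons.mp h1).1
                omega
    exact gen h (fun b hb => hb ▸ List.prefix_refl _)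
  · intro h
    exact BCov.zeta h (BCov.eta rfl)

lemma mem_of_prefix_mem {α : Set (List ℕ)}
    (h3 : ∀ (a : List ℕ) (x : ℕ), a ++ [x] ∈ α → a ∈ α) :
    ∀ (t b : List ℕ), b ++ t ∈ α → b ∈ α := by
  intro t
  induction t using List.reverseRecOn with
  | nil => intro b h; simpa using h
  | append_singleton s x ih =>
      intro b h
      exact ih b (h3 (b ++ s) x (by simpa [List.append_assoc] using h))

/-- Elementary characterisation of ideal points of the formal Baire space. -/
theorem idealPoint_iff (α : Set (List ℕ)) :
    IsIdealPoint α ↔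
      (α.Nonempty ∧
       (∀ a b : List ℕ, a ∈ α → b ∈ α → ∃ c ∈ α, a <+: c ∧ b <+: c) ∧
       (∀ (a : List ℕ) (x : ℕ), a ++ [x] ∈ α → a ∈ α) ∧
       (∀ a : List ℕ, a ∈ α → ∃ x : ℕ, a ++ [x] ∈ α)) := by
  constructor
  · rintro ⟨h1, h2, h3, h4⟩
    refine ⟨h1, ?_, ?_, ?_⟩
    · intro a b ha hb
      obtain ⟨c, hc, hca, hcb⟩ := h2 a b ha hb
      exact ⟨c, hc, bcov_singleton_iff.mp hca, bcov_singleton_iff.mp hcb⟩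
    · intro a x hax
      obtain ⟨b, hb, hba⟩ := h3 (a ++ [x]) {a}
        (bcov_singleton_iff.mpr (List.prefix_append _ _)) hax
      exact hba ▸ hb
    · intro a ha
      obtain ⟨b, hb, hbU⟩ := h3 a {c | ∃ x : ℕ, c = a ++ [x]}
        (BCov.digamma fun n => BCov.eta ⟨n, rfl⟩) ha
      obtain ⟨x, rfl⟩ := hbU
      exact ⟨x, hb⟩
  · rintro ⟨h1, h2, h3, h4⟩
    have split : ∀ (a : List ℕ) (U : Set (List ℕ)), BCov a U → a ∈ α → ∃ b ∈ α, b ∈ U := by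
      intro a U hcov
      induction hcov with
      | eta h => intro ha; exact ⟨_, ha, h⟩
      | zeta hb _ ih =>
          intro ha
          obtain ⟨t, rfl⟩ := hb
          exact ih (mem_of_prefix_mem h3 t _ ha)
      | digamma _ ih =>
          intro ha
          obtain ⟨x, hx⟩ := h4 _ ha
          exact ih x hx
    refine ⟨h1, ?_, split, ?_⟩
    · intro a b ha hb
      obtain ⟨c, hc, hca, hcb⟩ := h2 a b ha hb
      exact ⟨c, hc, bcov_singleton_iff.mpr hca, bcov_singleton_iff.mpr hcb⟩
    · intro a V ha hV
      exact ⟨α, ha, hV, fun W ⟨b, hb, hcov⟩ => split b W hcov hb⟩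
end

section
/- There is a bijective correspondence between ideal points of the formal Baire space and functions from ℕ to ℕ: each ideal point α corresponds to the unique function f with α = {initial segments of f}, and conversely the set of initial segments of any f : ℕ → ℕ is an ideal point. -/
/-- prefix of a segment is a segment -/
lemma seg_prefix {f : ℕ → ℕ} {a b : List ℕ} (ha : a = (List.range a.length).map f)
    (hb : b <+: a) : b = (List.range b.length).map f := by
  have hlen : b.length ≤ a.length := hb.length_le
  have : b = a.take b.length := (List.prefix_iff_eq_take).1 hb
  rw [this, ha, ← List.map_take, List.take_range, min_eq_left hlen]
  congr 1
  rw [this, ha]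
  simp [min_eq_left hlen]

lemma seg_comp {f : ℕ → ℕ} {a b : List ℕ} (ha : a = (List.range a.length).map f)
    (hb : b = (List.range b.length).map f) : a <+: b ∨ b <+: a := by
  rcases le_total a.length b.length with h | h
  · left
    have : b.take a.length = a := by
      rw [hb, ← List.map_take, List.take_range, min_eq_left h, ← ha]
    exact this ▸ List.take_prefix _ _
  · right
    have : a.take b.length = b := by
      rw [ha, ← List.map_take, List.take_range, min_eq_left h, ← hb]
    exact this ▸ List.take_prefix _ _

lemma seg_zeroext (c : List ℕ) : c = (List.range c.length).map (fun n => c.getD n 0) := by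
  apply List.ext_getElem (by simp)
  intro i h1 h2
  simp [List.getD, List.getElem?_eq_getElem h1]

lemma seg_succ {f : ℕ → ℕ} {a : List ℕ} (ha : a = (List.range a.length).map f) :
    a ++ [f a.length] = (List.range (a ++ [f a.length]).length).map f := by
  simp only [List.length_append, List.length_singleton, List.range_succ, List.map_append]
  rw [← ha]
  simp

lemma bcov_seg {c : List ℕ} {U : Set (List ℕ)} (h : BCov c U) :
    ∀ f : ℕ → ℕ, c = (List.range c.length).map f →
      ∃ b ∈ U, b = (List.range b.length).map f := by
  induction h with
  | eta h => exact fun f hc => ⟨_, h, hc⟩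
  | zeta hpre _ ih => exact fun f hc => ih f (seg_prefix hc hpre)
  | digamma _ ih => intro f hc; exact ih (f _) f (seg_succ hc)

noncomputable def bChain (α : Set (List ℕ)) (h0 : ([] : List ℕ) ∈ α)
    (hext : ∀ a ∈ α, ∃ n, a ++ [n] ∈ α) : ℕ → {p : List ℕ // p ∈ α}
  | 0 => ⟨[], h0⟩
  | n + 1 =>
    let p := bChain α h0 hext n
    ⟨p.1 ++ [Classical.choose (hext p.1 p.2)], Classical.choose_spec (hext p.1 p.2)⟩

lemma bChain_succ (α : Set (List ℕ)) (h0 : ([] : List ℕ) ∈ α)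
    (hext : ∀ a ∈ α, ∃ n, a ++ [n] ∈ α) (n : ℕ) :
    (bChain α h0 hext (n + 1)).1 =
      (bChain α h0 hext n).1 ++
        [Classical.choose (hext (bChain α h0 hext n).1 (bChain α h0 hext n).2)] := rfl

lemma bChain_length (α : Set (List ℕ)) (h0 : ([] : List ℕ) ∈ α)
    (hext : ∀ a ∈ α, ∃ n, a ++ [n] ∈ α) : ∀ n, (bChain α h0 hext n).1.length = n := by
  intro n
  induction n with
  | zero => rfl
  | succ n ih => rw [bChain_succ]; simp [ih]

/-- Bijective correspondence between ideal points of the formal Baire space and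
functions `ℕ → ℕ`: the set of initial segments of any `f` is an ideal point, and
every ideal point is the set of initial segments of a unique `f`. -/
theorem idealPoints_biject_with_functions :
    (∀ f : ℕ → ℕ, IsIdealPoint {a : List ℕ | a = (List.range a.length).map f}) ∧
    (∀ α : Set (List ℕ), IsIdealPoint α →
      ∃! f : ℕ → ℕ, α = {a : List ℕ | a = (List.range a.length).map f}) := by
  have part1 : ∀ f : ℕ → ℕ, IsIdealPoint {a : List ℕ | a = (List.range a.length).map f} := by
    intro f
    have hsplit : ∀ (a : List ℕ) (U : Set (List ℕ)), BCov a U →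
        a ∈ {a : List ℕ | a = (List.range a.length).map f} →
        ∃ b ∈ {a : List ℕ | a = (List.range a.length).map f}, b ∈ U := by
      intro a U hcov ha
      obtain ⟨b, hbU, hbseg⟩ := bcov_seg hcov f ha
      exact ⟨b, hbseg, hbU⟩
    refine ⟨⟨[], by simp⟩, ?_, hsplit, ?_⟩
    · intro a b ha hb
      rcases seg_comp ha hb with h | h
      · exact ⟨b, hb, BCov.zeta h (BCov.eta rfl), BCov.eta rfl⟩
      · exact ⟨a, ha, BCov.eta rfl, BCov.zeta h (BCov.eta rfl)⟩
    · intro a V ha hV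
      exact ⟨_, ha, hV, fun W ⟨b, hb, hcov⟩ => hsplit b W hcov hb⟩
  refine ⟨part1, ?_⟩
  intro α hα
  obtain ⟨⟨a0, ha0⟩, hfilt, hsplit, hpos⟩ := hα
  -- α is closed under prefixes
  have hpre : ∀ a ∈ α, ∀ b, b <+: a → b ∈ α := by
    intro a ha b hb
    obtain ⟨c, hc, hcb⟩ := hsplit a {b} (BCov.zeta hb (BCov.eta rfl)) ha
    rwa [Set.mem_singleton_iff.mp hcb] at hc
  have h0 : ([] : List ℕ) ∈ α := hpre a0 ha0 [] List.nil_prefix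
  -- every element has a one-step extension
  have hext : ∀ a ∈ α, ∃ n, a ++ [n] ∈ α := by
    intro a ha
    obtain ⟨b, hb, n, hn⟩ :=
      hsplit a {b | ∃ n, b = a ++ [n]} (BCov.digamma fun n => BCov.eta ⟨n, rfl⟩) ha
    exact ⟨n, hn ▸ hb⟩
  -- any two elements of α are comparable
  have hcomp : ∀ a ∈ α, ∀ b ∈ α, a <+: b ∨ b <+: a := by
    intro a ha b hb
    obtain ⟨c, _, hca, hcb⟩ := hfilt a b ha hb
    obtain ⟨a', ha', haseg⟩ := bcov_seg hca _ (seg_zeroext c)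
    obtain ⟨b', hb', hbseg⟩ := bcov_seg hcb _ (seg_zeroext c)
    rw [Set.mem_singleton_iff.mp ha'] at haseg
    rw [Set.mem_singleton_iff.mp hb'] at hbseg
    exact seg_comp haseg hbseg
  -- build the function
  set L := bChain α h0 hext with hL
  set f : ℕ → ℕ := fun n => Classical.choose (hext (L n).1 (L n).2) with hf
  have hLseg : ∀ n, (L n).1 = (List.range n).map f := by
    intro n
    induction n with
    | zero => rfl
    | succ n ih =>
      rw [bChain_succ, List.range_succ, List.map_append]
      exact congrArg₂ (· ++ ·) ih rfl
  have key : α = {a : List ℕ | a = (List.range a.length).map f} := by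
    ext a
    constructor
    · intro ha
      have hlen : (L a.length).1.length = a.length := bChain_length α h0 hext a.length
      have := hcomp a ha (L a.length).1 (L a.length).2
      have heq : a = (L a.length).1 := by
        rcases this with h | h
        · exact h.eq_of_length (by rw [hlen])
        · exact (h.eq_of_length (by rw [hlen])).symm
      rw [Set.mem_setOf_eq, heq, hLseg]
      simp
    · intro ha
      rw [Set.mem_setOf_eq] at ha
      rw [ha, ← hLseg]
      exact (L a.length).2
  refine ⟨f, key, ?_⟩
  intro g hg
  funext n
  have h1 : (List.range (n + 1)).map g ∈ α := by
    rw [hg]; simp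
  rw [key, Set.mem_setOf_eq] at h1
  simp only [List.length_map, List.length_range] at h1
  have := congrArg (fun l => l.getD n 0) h1
  simpa [List.range_succ] using this
end

section
/- Let s ⊆ ℕ* × ℕ be monotone (meaning a ≤ b and b s n imply a s n, where ≤ is reverse prefix order). Then s is single-valued (a s n and a s m imply n = m) if and only if for all n, m ∈ ℕ, s⁻(n) ↓ s⁻(m) ◁_B s⁻({n} ↓ {m}), where ◁_B is the formal Baire cover, s⁻(n) = {a | a s n}, and for subsets of ℕ with the discrete cover, {n} ↓ {m} = {k | k = n ∧ k = m}. -/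
/-- `U ↓ V`: common refinements (in the reverse prefix order) of elements of `U` and `V`. -/
def Down (U V : Set (List ℕ)) : Set (List ℕ) :=
  {c : List ℕ | ∃ a ∈ U, ∃ b ∈ V, a <+: c ∧ b <+: c}

lemma BCov_nonempty {a : List ℕ} {U : Set (List ℕ)} (h : BCov a U) : U.Nonempty := by
  induction h with
  | eta h => exact ⟨_, h⟩
  | zeta _ _ ih => exact ih
  | digamma _ ih => exact ih 0

/-- A monotone relation `s ⊆ ℕ* × ℕ` is single-valued iff
`s⁻(n) ↓ s⁻(m) ◁_B s⁻({n} ↓ {m})` for all `n, m`. -/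
theorem singleValued_iff_down (s : List ℕ → ℕ → Prop)
    (hmono : ∀ (a b : List ℕ) (n : ℕ), b <+: a → s b n → s a n) :
    (∀ (a : List ℕ) (n m : ℕ), s a n → s a m → n = m) ↔
    (∀ n m : ℕ, ∀ c ∈ Down {a : List ℕ | s a n} {a : List ℕ | s a m},
      BCov c {a : List ℕ | ∃ k : ℕ, (k = n ∧ k = m) ∧ s a k}) := by
  constructor
  · rintro hsv n m c ⟨a, ha, b, hb, hac, hbc⟩
    have hcn : s c n := hmono c a n hac ha
    have hcm : s c m := hmono c b m hbc hb
    exact BCov.eta ⟨n, ⟨rfl, hsv c n m hcn hcm⟩, hcn⟩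
  · intro h a n m han ham
    have hcov := h n m a ⟨a, han, a, ham, List.prefix_refl a, List.prefix_refl a⟩
    by_contra hne
    have hempty : {a : List ℕ | ∃ k : ℕ, (k = n ∧ k = m) ∧ s a k} = ∅ := by
      ext x; simp only [Set.mem_setOf_eq, Set.mem_empty_iff_false, iff_false]
      rintro ⟨k, ⟨rfl, rfl⟩, -⟩; exact hne rfl
    rw [hempty] at hcov
    exact (BCov_nonempty hcov).ne_empty rfl
end

section
/- For every finite sequence a of naturals and every subset U ⊆ ℕ*: a ◁_B U if and only if nil ◁_B (U ∪ C_a), where C_a = {b ∈ ℕ* | length b = length a ∧ b ≠ a} and nil is the empty sequence. -/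
lemma BCov.mono {a : List ℕ} {U V : Set (List ℕ)} (h : BCov a U) (hUV : U ⊆ V) :
    BCov a V := by
  induction h with
  | eta h => exact .eta (hUV h)
  | zeta hp _ ih => exact .zeta hp (ih hUV)
  | digamma _ ih => exact .digamma fun n => ih n hUV

lemma BCov.trans {a : List ℕ} {V W : Set (List ℕ)} (h : BCov a V)
    (hVW : ∀ b ∈ V, BCov b W) : BCov a W := by
  induction h with
  | eta h => exact hVW _ h
  | zeta hp _ ih => exact .zeta hp (ih hVW)
  | digamma _ ih => exact .digamma fun n => ih n hVW

lemma BCov.len (n : ℕ) (c : List ℕ) : BCov c {b | b.length = c.length + n} := by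
  induction n generalizing c with
  | zero => exact .eta rfl
  | succ n ih =>
      refine .digamma fun k => (ih (c ++ [k])).mono ?_
      intro b hb
      simp only [Set.mem_setOf_eq, List.length_append, List.length_singleton] at hb ⊢
      omega

lemma BCov.local_key {a c : List ℕ} {U : Set (List ℕ)}
    (h : BCov c (U ∪ {b : List ℕ | b.length = a.length ∧ b ≠ a})) :
    (c <+: a → BCov a U) ∧ (a <+: c → BCov c U) := by
  generalize hV : (U ∪ {b : List ℕ | b.length = a.length ∧ b ≠ a}) = V at h
  induction h with
  | @eta c _ h =>
      subst hV
      rcases h with h | ⟨hlen, hne⟩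
      · exact ⟨fun hp => .zeta hp (.eta h), fun _ => .eta h⟩
      · constructor
        · intro hp; exact absurd (hp.eq_of_length (by omega)) hne
        · intro hp; exact absurd (hp.eq_of_length (by omega)).symm hne
  | @zeta c b _ hp _ ih =>
      replace ih := ih hV
      constructor
      · intro hca; exact ih.1 (hp.trans hca)
      · intro hac
        rcases List.prefix_or_prefix_of_prefix hac hp with h | h
        · exact .zeta hp (ih.2 h)
        · exact .zeta hac (ih.1 h)
  | @digamma c _ _ ih =>
      replace ih := fun n => ih n hV
      constructor
      · intro hca
        obtain ⟨t, ht⟩ := hca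
        cases t with
        | nil =>
            simp only [List.append_nil] at ht
            subst ht
            exact .digamma fun n => (ih n).2 ⟨[n], rfl⟩
        | cons m t' =>
            exact (ih m).1 ⟨t', by simpa using ht⟩
      · intro hac
        exact .digamma fun n => (ih n).2 (hac.trans ⟨[n], rfl⟩)

/-- `a ◁_B U` iff `nil ◁_B (U ∪ C_a)` where `C_a` is the set of sequences of the
same length as `a` distinct from `a`. -/
theorem cov_iff_nil_cov_union (a : List ℕ) (U : Set (List ℕ)) :
    BCov a U ↔
      BCov ([] : List ℕ) (U ∪ {b : List ℕ | b.length = a.length ∧ b ≠ a}) := by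
  constructor
  · intro h
    refine (BCov.len a.length []).trans ?_
    intro b hb
    simp only [Set.mem_setOf_eq, List.length_nil, Nat.zero_add] at hb
    by_cases hba : b = a
    · subst hba; exact h.mono Set.subset_union_left
    · exact .eta (Or.inr ⟨hb, hba⟩)
  · intro h
    exact (BCov.local_key h).1 (List.nil_prefix)
end

section
/- Decidable bar induction implies monotone bar induction restricted to Σ⁰₁ bars: if every decidable bar on ℕ* bars inductively (BI_D), then for every monotone Σ⁰₁ bar U ⊆ ℕ* and every inductive subset V with U ⊆ V, the empty sequence belongs to V. -/
/-- Decidable bar induction implies monotone bar induction for Σ⁰₁ bars. -/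
theorem BID_implies_Sigma01_BIM
    (pair : ℕ → ℕ → ℕ) (j0 j1 : ℕ → ℕ)
    (hsurj : ∀ k : ℕ, pair (j0 k) (j1 k) = k)
    (hj0 : ∀ n m : ℕ, j0 (pair n m) = n)
    (hj1 : ∀ n m : ℕ, j1 (pair n m) = m)
    (hle : ∀ n m : ℕ, n ≤ pair n m ∧ m ≤ pair n m)
    -- Decidable bar induction (BI_D):
    (BID : ∀ u : List ℕ → Bool,
      (∀ f : ℕ → ℕ, ∃ n : ℕ, u ((List.range n).map f) = true) →
      ∀ V : Set (List ℕ),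
        (∀ a : List ℕ, (∀ x : ℕ, a ++ [x] ∈ V) → a ∈ V) →
        (∀ a : List ℕ, u a = true → a ∈ V) → [] ∈ V)
    -- U is a monotone Σ⁰₁ bar:
    (U : Set (List ℕ)) (D : List ℕ → ℕ → Bool)
    (hSigma : ∀ a : List ℕ, a ∈ U ↔ ∃ n : ℕ, D a n = true)
    (hmono : ∀ a b : List ℕ, b <+: a → b ∈ U → a ∈ U)
    (hbar : ∀ f : ℕ → ℕ, ∃ n : ℕ, (List.range n).map f ∈ U)
    -- V is inductive and contains U:
    (V : Set (List ℕ))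
    (hind : ∀ a : List ℕ, (∀ x : ℕ, a ++ [x] ∈ V) → a ∈ V)
    (hUV : U ⊆ V) :
    [] ∈ V := by
  set u : List ℕ → Bool :=
    fun a => decide (∃ k ≤ a.length, ∃ m ≤ a.length, D (a.take k) m = true) with hu
  apply BID u ?_ V hind
  · intro a ha
    simp only [hu, decide_eq_true_eq] at ha
    obtain ⟨k, _, m, _, hD⟩ := ha
    exact hUV (hmono a _ (List.take_prefix k a) ((hSigma _).2 ⟨m, hD⟩))
  · intro f
    obtain ⟨n, hn⟩ := hbar f
    obtain ⟨m, hm⟩ := (hSigma _).1 hn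
    refine ⟨max n m, ?_⟩
    simp only [hu, decide_eq_true_eq]
    refine ⟨n, by simp, m, by simp, ?_⟩
    rw [← List.map_take, List.take_range, min_eq_left (le_max_left n m)]
    exact hm
end

section
/- Every monotone Σ⁰₁ bar on ℕ* contains a decidable bar: if U ⊆ ℕ* is monotone and Σ⁰₁ (witnessed by decidable D with a ∈ U ↔ ∃ n, (a,n) ∈ D) and U is a bar, then V = {a | (ā j₀(|a|), j₁(|a|)) ∈ D} is a decidable bar contained in U, where ā k denotes the initial segment of a of length k. -/
/-- Every monotone Σ⁰₁ bar contains a decidable bar, namely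
`V = {a | (ā j₀(|a|), j₁(|a|)) ∈ D}`. -/
theorem monotone_sigma01_bar_contains_decidable_bar
    (pair : ℕ → ℕ → ℕ) (j0 j1 : ℕ → ℕ)
    (hsurj : ∀ k : ℕ, pair (j0 k) (j1 k) = k)
    (hj0 : ∀ n m : ℕ, j0 (pair n m) = n)
    (hj1 : ∀ n m : ℕ, j1 (pair n m) = m)
    (hle : ∀ n m : ℕ, n ≤ pair n m ∧ m ≤ pair n m)
    (U : Set (List ℕ)) (D : List ℕ → ℕ → Bool)
    (hSigma : ∀ a : List ℕ, a ∈ U ↔ ∃ n : ℕ, D a n = true)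
    (hmono : ∀ a b : List ℕ, b <+: a → b ∈ U → a ∈ U)
    (hbar : ∀ f : ℕ → ℕ, ∃ n : ℕ, (List.range n).map f ∈ U) :
    (∀ a : List ℕ, D (a.take (j0 a.length)) (j1 a.length) = true → a ∈ U) ∧
    (∀ f : ℕ → ℕ, ∃ n : ℕ,
      D (((List.range n).map f).take (j0 n)) (j1 n) = true) := by
  constructor
  · intro a ha
    exact hmono a _ (List.take_prefix _ _) ((hSigma _).2 ⟨_, ha⟩)
  · intro f
    obtain ⟨n, hn⟩ := hbar f
    obtain ⟨m, hm⟩ := (hSigma _).1 hn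
    refine ⟨pair n m, ?_⟩
    rw [hj0, hj1]
    rw [show List.take n (List.map f (List.range (pair n m))) = List.map f (List.range n) by rw [← List.map_take, List.take_range, min_eq_left (hle n m).1]]
    exact hm
end

section
/- Monotone bar induction is equivalent to spatiality of the formal Baire space at the root: (∀ monotone bar U, ∀ inductive V ⊇ U, nil ∈ V) if and only if (for all U ⊆ ℕ*, if every ideal point of the formal Baire space meets U then nil ◁_B U). -/
/-- Ideal points of the formal Baire space (elementary characterisation):
inhabited, filtering, prefix-closed, every element has a one-step extension. -/
def IdealPt (α : Set (List ℕ)) : Prop :=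
  α.Nonempty ∧
  (∀ a b : List ℕ, a ∈ α → b ∈ α → ∃ c ∈ α, a <+: c ∧ b <+: c) ∧
  (∀ (a : List ℕ) (x : ℕ), a ++ [x] ∈ α → a ∈ α) ∧
  (∀ a : List ℕ, a ∈ α → ∃ x : ℕ, a ++ [x] ∈ α)

theorem BCov_key (U V : Set (List ℕ))
    (hmono : ∀ a b : List ℕ, b <+: a → b ∈ U → a ∈ U)
    (hind : ∀ a : List ℕ, (∀ x : ℕ, a ++ [x] ∈ V) → a ∈ V) (hUV : U ⊆ V) :
    ∀ a : List ℕ, BCov a U → ∀ c, a <+: c → c ∈ V := by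
  intro a hc
  induction hc with
  | eta h => intro c hac; exact hUV (hmono c _ hac h)
  | zeta hba hb ih => intro c hac; exact ih hmono hUV c (hba.trans hac)
  | digamma h ih =>
    rename_i a U'
    intro c hac
    obtain ⟨t, ht⟩ := hac
    cases t with
    | nil =>
      simp only [List.append_nil] at ht
      subst ht
      exact hind a (fun x => ih x hmono hUV (a ++ [x]) (List.prefix_refl _))
    | cons n t' =>
      exact ih n hmono hUV c ⟨t', by simp [← ht]⟩

/-- Monotone bar induction is equivalent to spatiality of the formal Baire
space at the root. -/
theorem BIM_iff_spatiality_at_root :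
    (∀ U V : Set (List ℕ),
      (∀ a b : List ℕ, b <+: a → b ∈ U → a ∈ U) →
      (∀ α : Set (List ℕ), IdealPt α → ∃ a ∈ α, a ∈ U) →
      (∀ a : List ℕ, (∀ x : ℕ, a ++ [x] ∈ V) → a ∈ V) →
      U ⊆ V → [] ∈ V)
    ↔
    (∀ U : Set (List ℕ),
      (∀ α : Set (List ℕ), IdealPt α → ∃ a ∈ α, a ∈ U) →
      BCov ([] : List ℕ) U) := by
  constructor
  · intro BIM U hbar
    have := BIM {a | ∃ b, b <+: a ∧ b ∈ U} {a | BCov a U}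
      (fun a b hba ⟨d, hd, hdU⟩ => ⟨d, hd.trans hba, hdU⟩)
      (fun α hα => by
        obtain ⟨a, haα, haU⟩ := hbar α hα
        exact ⟨a, haα, a, List.prefix_refl a, haU⟩)
      (fun a h => BCov.digamma h)
      (fun a ⟨b, hb, hbU⟩ => BCov.zeta hb (BCov.eta hbU))
    exact this
  · intro spat U V hmono hbar hind hUV
    have hcov : BCov ([] : List ℕ) U := spat U hbar
    exact BCov_key U V hmono hind hUV [] hcov [] (List.prefix_refl _)
end

section
/- Spatiality of the formal Baire space at the root implies full spatiality: if nil ◁_{Ip} U implies nil ◁_B U for all U ⊆ ℕ*, then a ◁_{Ip} U implies a ◁_B U for all a ∈ ℕ* and U ⊆ ℕ*, where a ◁_{Ip} U means every ideal point containing a meets U. -/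
lemma prefix_eq_of_length {c a : List ℕ} (h : c <+: a) (hl : c.length = a.length) :
    c = a := by
  obtain ⟨t, rfl⟩ := h
  simp at hl
  simp [hl]

lemma prefix_comparable {b a c : List ℕ} (h1 : b <+: c) (h2 : a <+: c) :
    b <+: a ∨ a <+: b := by
  rw [List.prefix_iff_eq_take] at h1 h2
  rcases le_or_gt b.length a.length with hle | hlt
  · left
    rw [h1, h2]
    have := List.take_prefix b.length (List.take a.length c)
    rwa [List.take_take, min_eq_left hle] at this
  · right
    rw [h1, h2]
    have := List.take_prefix a.length (List.take b.length c)
    rwa [List.take_take, min_eq_left hlt.le] at this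

/-- Key stripping lemma: from a cover of `U ∪ C_a` extract a cover of `U`. -/
lemma strip_aux {U V : Set (List ℕ)} {a c : List ℕ}
    (hc : BCov c V) (hV : V = U ∪ {b | b.length = a.length ∧ b ≠ a}) :
    (c <+: a → BCov a U) ∧ (a <+: c → BCov c U) := by
  induction hc with
  | @eta c _ hm =>
    rw [hV] at hm
    rcases hm with hm | ⟨hlen, hne⟩
    · exact ⟨fun hp => BCov.zeta hp (BCov.eta hm), fun _ => BCov.eta hm⟩
    · constructor
      · intro hp; exact absurd (prefix_eq_of_length hp hlen) hne
      · intro hp; exact absurd (prefix_eq_of_length hp hlen.symm).symm hne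
  | @zeta c b _ hp hb ih =>
    constructor
    · intro hca
      exact (ih hV).1 (hp.trans hca)
    · intro hac
      rcases prefix_comparable hp hac with hba | hab
      · exact BCov.zeta hac ((ih hV).1 hba)
      · exact BCov.zeta hp ((ih hV).2 hab)
  | @digamma c _ hn ih =>
    constructor
    · intro hca
      obtain ⟨t, rfl⟩ := hca
      cases t with
      | nil =>
        rw [List.append_nil] at *
        exact BCov.digamma fun n => (ih n hV).2 ⟨[n], rfl⟩
      | cons x t =>
        have : c ++ [x] <+: c ++ x :: t := ⟨t, by simp⟩
        exact (ih x hV).1 this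
    · intro hac
      exact BCov.digamma fun n => (ih n hV).2 (hac.trans ⟨[n], rfl⟩)

lemma nil_mem_of_idealPt {α : Set (List ℕ)} (hα : IdealPt α) : ([] : List ℕ) ∈ α := by
  obtain ⟨⟨e, he⟩, _, hdown, _⟩ := hα
  induction e using List.reverseRecOn with
  | nil => exact he
  | append_singleton d x ih => exact ih (hdown d x he)

lemma mem_of_length {α : Set (List ℕ)} (hα : IdealPt α) (n : ℕ) :
    ∃ d ∈ α, d.length = n := by
  have hext := hα.2.2.2
  induction n with
  | zero => exact ⟨[], nil_mem_of_idealPt hα, rfl⟩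
  | succ m ih =>
    obtain ⟨d, hd, hl⟩ := ih
    obtain ⟨x, hx⟩ := hext d hd
    exact ⟨d ++ [x], hx, by simp [hl]⟩

/-- Spatiality at the root implies full spatiality of the formal Baire space. -/
theorem spatiality_at_root_implies_spatiality
    (h : ∀ U : Set (List ℕ),
      (∀ α : Set (List ℕ), IdealPt α → ([] : List ℕ) ∈ α → ∃ b ∈ α, b ∈ U) →
      BCov ([] : List ℕ) U) :
    ∀ (a : List ℕ) (U : Set (List ℕ)),
      (∀ α : Set (List ℕ), IdealPt α → a ∈ α → ∃ b ∈ α, b ∈ U) →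
      BCov a U := by
  intro a U hIp
  set Ca : Set (List ℕ) := {b | b.length = a.length ∧ b ≠ a} with hCa
  have hroot : BCov ([] : List ℕ) (U ∪ Ca) := by
    apply h
    intro α hα _
    obtain ⟨d, hd, hdl⟩ := mem_of_length hα a.length
    by_cases hda : d = a
    · subst hda
      obtain ⟨b, hb, hbU⟩ := hIp α hα hd
      exact ⟨b, hb, Or.inl hbU⟩
    · exact ⟨d, hd, Or.inr ⟨hdl, hda⟩⟩
  exact (strip_aux hroot rfl).1 a.nil_prefix
end

section
/- Let U ⊆ ℕ* be a spread. A subset α ⊆ ℕ* is an ideal point of the relativised topology B_U (with cover a ◁_U V iff a ◁_B (¬U ∪ V) and the greatest compatible positivity) if and only if α is an ideal point of the formal Baire space with α ⊆ U. -/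
/-- The relativised cover of a spread: `a ◁_U V ≡ a ◁_B (¬U ∪ V)`. -/
def UCov (U : Set (List ℕ)) (a : List ℕ) (V : Set (List ℕ)) : Prop :=
  BCov a (Uᶜ ∪ V)

/-- The greatest positivity compatible with `◁_U`: `a ⋉_U V ≡ a ⋉_B (U ∩ V)`. -/
def UPos (U : Set (List ℕ)) (a : List ℕ) (V : Set (List ℕ)) : Prop :=
  BPos a (U ∩ V)

/-- Ideal points of the relativised topology `B_U`. -/
def IsIdealPointU (U : Set (List ℕ)) (α : Set (List ℕ)) : Prop :=
  α.Nonempty ∧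
  (∀ a b : List ℕ, a ∈ α → b ∈ α →
    ∃ c ∈ α, UCov U c ({a} : Set (List ℕ)) ∧ UCov U c ({b} : Set (List ℕ))) ∧
  (∀ (a : List ℕ) (V : Set (List ℕ)), UCov U a V → a ∈ α → ∃ b ∈ α, b ∈ V) ∧
  (∀ (a : List ℕ) (V : Set (List ℕ)), a ∈ α → α ⊆ V → UPos U a V)

theorem bcov_mono {a : List ℕ} {V W : Set (List ℕ)} (h : BCov a V) (hVW : V ⊆ W) :
    BCov a W := by
  induction h with
  | eta h => exact BCov.eta (hVW h)
  | zeta hp _ ih => exact BCov.zeta hp (ih hVW)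
  | digamma _ ih => exact BCov.digamma (fun n => ih n hVW)

theorem chainSplit {β W : Set (List ℕ)}
    (hdown : ∀ d ∈ β, ∀ e, e <+: d → e ∈ β)
    (hstep : ∀ d ∈ β, ∃ n, d ++ [n] ∈ β) :
    ∀ {c : List ℕ}, BCov c W → c ∈ β → ∃ d ∈ β, d ∈ W := by
  intro c h
  induction h with
  | eta h => intro hc; exact ⟨_, hc, h⟩
  | zeta hp _ ih => intro hc; exact ih (hdown _ hc _ hp)
  | digamma _ ih =>
    intro hc
    obtain ⟨n, hn⟩ := hstep _ hc
    exact ih n hn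

noncomputable def pathSeq (U : Set (List ℕ)) (hext : ∀ a ∈ U, ∃ n : ℕ, a ++ [n] ∈ U)
    (a : List ℕ) (ha : a ∈ U) : ℕ → {l : List ℕ // l ∈ U ∧ a <+: l}
  | 0 => ⟨a, ha, List.prefix_refl a⟩
  | (k+1) =>
    let p := pathSeq U hext a ha k
    ⟨p.1 ++ [(hext p.1 p.2.1).choose], (hext p.1 p.2.1).choose_spec,
      p.2.2.trans (List.prefix_append _ _)⟩

theorem pathSeq_mono (U : Set (List ℕ)) (hext : ∀ a ∈ U, ∃ n : ℕ, a ++ [n] ∈ U)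
    (a : List ℕ) (ha : a ∈ U) {k j : ℕ} (h : k ≤ j) :
    (pathSeq U hext a ha k).1 <+: (pathSeq U hext a ha j).1 := by
  induction j with
  | zero => simp_all
  | succ j ih =>
    rcases Nat.lt_or_ge k (j+1) with h' | h'
    · exact (ih (Nat.lt_succ_iff.mp h')).trans (List.prefix_append _ _)
    · have : k = j + 1 := le_antisymm h h'
      subst this; exact List.prefix_refl _

theorem key (U : Set (List ℕ))
    (hpre : ∀ a b : List ℕ, a ∈ U → b <+: a → b ∈ U)
    (hext : ∀ a ∈ U, ∃ n : ℕ, a ++ [n] ∈ U)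
    {a c x : List ℕ} (ha : a ∈ U) (hca : c <+: a)
    (hcov : BCov c (Uᶜ ∪ {x})) : x <+: a ∨ a <+: x := by
  set g : ℕ → List ℕ := fun k => (pathSeq U hext a ha k).1 with hg
  set β : Set (List ℕ) := {l | ∃ k, l <+: g k} with hβ
  have hdown : ∀ d ∈ β, ∀ e, e <+: d → e ∈ β := by
    rintro d ⟨k, hk⟩ e he; exact ⟨k, he.trans hk⟩
  have hstep : ∀ d ∈ β, ∃ n, d ++ [n] ∈ β := by
    rintro d ⟨k, hk⟩
    obtain ⟨t, ht⟩ := hk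
    cases t with
    | nil =>
      refine ⟨(hext (g k) (pathSeq U hext a ha k).2.1).choose, k+1, ?_⟩
      have hd : d = g k := by simpa using ht
      have : g (k+1) = g k ++ [(hext (g k) (pathSeq U hext a ha k).2.1).choose] := rfl
      rw [this, hd]
    | cons n t' =>
      refine ⟨n, k, ⟨t', ?_⟩⟩
      rw [← ht]; simp
  have hcβ : c ∈ β := ⟨0, hca⟩
  obtain ⟨d, hdβ, hdW⟩ := chainSplit hdown hstep hcov hcβ
  have hdU : d ∈ U := by
    obtain ⟨k, hk⟩ := hdβ
    exact hpre _ _ (pathSeq U hext a ha k).2.1 hk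
  have hdx : d = x := by
    rcases hdW with h | h
    · exact absurd hdU h
    · exact h
  subst hdx
  obtain ⟨k, hk⟩ := hdβ
  have haβ : a <+: g k := (pathSeq U hext a ha k).2.2
  exact List.prefix_or_prefix_of_prefix hk haβ

/-- For a spread `U`, ideal points of `B_U` are exactly the ideal points of the
formal Baire space belonging to `U`. -/
theorem idealPointU_iff (U : Set (List ℕ))
    (hdec : ∀ a : List ℕ, a ∈ U ∨ a ∉ U)
    (hne : U.Nonempty)
    (hpre : ∀ a b : List ℕ, a ∈ U → b <+: a → b ∈ U)
    (hext : ∀ a ∈ U, ∃ n : ℕ, a ++ [n] ∈ U)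
    (α : Set (List ℕ)) :
    IsIdealPointU U α ↔ (IsIdealPoint α ∧ α ⊆ U) := by
  constructor
  · rintro ⟨hne', hfil, hsplit, hpos⟩
    have hαU : α ⊆ U := by
      intro a haα
      rcases hdec a with h | h
      · exact h
      · exfalso
        have hcov : UCov U a (∅ : Set (List ℕ)) := BCov.eta (Or.inl h)
        obtain ⟨b, _, hb⟩ := hsplit a ∅ hcov haα
        exact hb
    refine ⟨⟨hne', ?_, ?_, ?_⟩, hαU⟩
    · -- filtering
      intro a b haα hbα
      obtain ⟨c, hcα, hca, hcb⟩ := hfil a b haα hbα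
      have hcU : c ∈ U := hαU hcα
      have h1 : a <+: c ∨ c <+: a := key U hpre hext hcU (List.prefix_refl c) hca
      rcases h1 with h1 | h1
      · have h2 : b <+: c ∨ c <+: b := key U hpre hext hcU (List.prefix_refl c) hcb
        rcases h2 with h2 | h2
        · exact ⟨c, hcα, BCov.zeta h1 (BCov.eta rfl), BCov.zeta h2 (BCov.eta rfl)⟩
        · have hab : a <+: b := h1.trans h2
          exact ⟨b, hbα, BCov.zeta hab (BCov.eta rfl), BCov.eta rfl⟩
      · have h2 : b <+: a ∨ a <+: b := key U hpre hext (hαU haα) h1 hcb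
        rcases h2 with h2 | h2
        · exact ⟨a, haα, BCov.eta rfl, BCov.zeta h2 (BCov.eta rfl)⟩
        · exact ⟨b, hbα, BCov.zeta h2 (BCov.eta rfl), BCov.eta rfl⟩
    · -- splitting
      intro a W hcov haα
      have : UCov U a W := bcov_mono hcov (Set.subset_union_right)
      exact hsplit a W this haα
    · -- positivity
      intro a V haα hαV
      obtain ⟨W, h1, h2, h3⟩ := hpos a V haα hαV
      exact ⟨W, h1, h2.trans Set.inter_subset_right, h3⟩
  · rintro ⟨⟨hne', hfil, hsplit, hpos⟩, hαU⟩
    refine ⟨hne', ?_, ?_, ?_⟩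
    · intro a b haα hbα
      obtain ⟨c, hcα, hca, hcb⟩ := hfil a b haα hbα
      exact ⟨c, hcα, bcov_mono hca Set.subset_union_right,
        bcov_mono hcb Set.subset_union_right⟩
    · intro a V hcov haα
      obtain ⟨b, hbα, hb⟩ := hsplit a (Uᶜ ∪ V) hcov haα
      rcases hb with hb | hb
      · exact absurd (hαU hbα) hb
      · exact ⟨b, hbα, hb⟩
    · intro a V haα hαV
      exact hpos a (U ∩ V) haα (fun x hx => ⟨hαU hx, hαV hx⟩)
end

section
/- Every spread is a retract of the formal Baire space: for each spread U there is a formal map s : B → B_U inductively defined by (nil s nil); (a s b and b*n ∈ U imply a*n s b*n); (a s b and b*n ∉ U imply a*n s b*l where l is the least number with b*l ∈ U), such that the composite of the inclusion id : B_U → B followed by s : B → B_U is the identity formal map, i.e. for all a, b ∈ ℕ*: a ◁_U s⁻(b) ↔ a ◁_U {b}. -/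
/-- The retraction of the formal Baire space onto a spread `U`, defined
inductively: `nil s nil`; if `a s b` and `b*n ∈ U` then `a*n s b*n`; if
`a s b` and `b*n ∉ U` then `a*n s b*l` where `l` is least with `b*l ∈ U`. -/
inductive Ret (U : Set (List ℕ)) : List ℕ → List ℕ → Prop
  | nil : Ret U [] []
  | mem {a b : List ℕ} {n : ℕ} :
      Ret U a b → b ++ [n] ∈ U → Ret U (a ++ [n]) (b ++ [n])
  | notMem {a b : List ℕ} {n l : ℕ} :
      Ret U a b → b ++ [n] ∉ U → b ++ [l] ∈ U → (∀ k < l, b ++ [k] ∉ U) →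
      Ret U (a ++ [n]) (b ++ [l])

/-- Every spread is a retract of the formal Baire space: the composite of the
inclusion `B_U → B` with the retraction `s : B → B_U` is the identity formal
map, i.e. `a ◁_U s⁻(b) ↔ a ◁_U {b}`. -/
theorem spread_retract (U : Set (List ℕ))
    (hdec : ∀ a : List ℕ, a ∈ U ∨ a ∉ U)
    (hne : U.Nonempty)
    (hpre : ∀ a b : List ℕ, a ∈ U → b <+: a → b ∈ U)
    (hext : ∀ a ∈ U, ∃ n : ℕ, a ++ [n] ∈ U) :
    ∀ a b : List ℕ,
      BCov a (Uᶜ ∪ {c : List ℕ | Ret U c b}) ↔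
      BCov a (Uᶜ ∪ ({b} : Set (List ℕ))) := by
  -- monotonicity of BCov
  have mono : ∀ {a : List ℕ} {V W : Set (List ℕ)}, BCov a V → V ⊆ W → BCov a W := by
    intro a V W h hVW
    induction h with
    | eta ha => exact BCov.eta (hVW ha)
    | zeta hp _ ih => exact BCov.zeta hp (ih hVW)
    | digamma _ ih => exact BCov.digamma fun n => ih n hVW
  -- if a ∈ U then Ret U a a
  have ret_self : ∀ a : List ℕ, a ∈ U → Ret U a a := by
    intro a
    induction a using List.reverseRecOn with
    | nil => intro _; exact Ret.nil
    | append_singleton c n ih =>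
      intro h
      exact Ret.mem (ih (hpre _ _ h (List.prefix_append _ _))) h
  -- if Ret U a b and a ∈ U then a = b
  have ret_eq : ∀ {a b : List ℕ}, Ret U a b → a ∈ U → a = b := by
    intro a b h
    induction h with
    | nil => intro _; rfl
    | mem hr hm ih =>
      intro h
      rw [ih (hpre _ _ h (List.prefix_append _ _))]
    | notMem hr hn hl hk ih =>
      intro h
      have := ih (hpre _ _ h (List.prefix_append _ _))
      subst this
      exact absurd h hn
  have trans : ∀ {a : List ℕ} {V W : Set (List ℕ)}, BCov a V →
      (∀ x ∈ V, BCov x W) → BCov a W := by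
    intro a V W h hVW
    induction h with
    | eta ha => exact hVW _ ha
    | zeta hp _ ih => exact BCov.zeta hp (ih hVW)
    | digamma _ ih => exact BCov.digamma fun n => ih n hVW
  intro a b
  constructor
  · intro h
    refine trans h ?_
    intro x hx
    rcases hx with hx | hx
    · exact BCov.eta (Or.inl hx)
    · rcases hdec x with h' | h'
      · exact BCov.eta (Or.inr (ret_eq hx h'))
      · exact BCov.eta (Or.inl h')
  · intro h
    refine mono h ?_
    intro x hx
    rcases hx with hx | hx
    · exact Or.inl hx
    · rcases hx with rfl
      rcases hdec x with h' | h'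
      · exact Or.inr (ret_self x h')
      · exact Or.inl h'
end

section
/- Let S, T be sets, ◁ and ◁' covers on S and T respectively, and ⋉' a positivity on T (satisfying coreflexivity and cotransitivity). If ◁' ⊆ ◁ (i.e. a ◁' U implies a ◁ U) and ⋉' is compatible with ◁ (a ◁ U and a ⋉' V imply some element of U is ⋉'-related to V), then ⋉' is compatible with ◁'. Consequently, if a relation s ⊆ S × T satisfies conditions (FM1)–(FM3) of a formal map and the positivity of T is the greatest one compatible with its cover, then s also satisfies (FM4) and hence is a formal map. -/
/-- If `◁' ⊆ ◁` and a positivity `⋉'` is compatible with `◁`, then it is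
compatible with `◁'`. Consequently, if a relation `s` satisfies (FM1)–(FM3) and
the positivity of `T` is the greatest one compatible with its cover, then `s`
also satisfies (FM4), hence is a formal map. -/
theorem compat_of_smaller_cover_and_FM4 {S T : Type*}
    (covS : S → Set S → Prop) (covT : T → Set T → Prop)
    (posS : S → Set S → Prop) (posT : T → Set T → Prop)
    -- covS is a cover:
    (hSrefl : ∀ (a : S) (U : Set S), a ∈ U → covS a U)
    (hStrans : ∀ (a : S) (U V : Set S), covS a U → (∀ b ∈ U, covS b V) → covS a V)
    (hSdownright : ∀ (a : S) (U V : Set S), covS a U → covS a V →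
      covS a {c : S | ∃ x ∈ U, ∃ y ∈ V, covS c {x} ∧ covS c {y}})
    -- posS is a positivity compatible with covS:
    (hScorefl : ∀ (a : S) (U : Set S), posS a U → a ∈ U)
    (hScotrans : ∀ (a : S) (U V : Set S), posS a U →
      (∀ b : S, posS b U → b ∈ V) → posS a V)
    (hScompat : ∀ (a : S) (U V : Set S), covS a U → posS a V → ∃ b ∈ U, posS b V)
    -- posT is the greatest positivity compatible with covT:
    (hTcorefl : ∀ (b : T) (V : Set T), posT b V → b ∈ V)
    (hTcotrans : ∀ (b : T) (V W : Set T), posT b V →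
      (∀ c : T, posT c V → c ∈ W) → posT b W)
    (hTcompat : ∀ (b : T) (V W : Set T), covT b V → posT b W → ∃ c ∈ V, posT c W)
    (hTgreatest : ∀ pos' : T → Set T → Prop,
      (∀ (b : T) (V : Set T), pos' b V → b ∈ V) →
      (∀ (b : T) (V W : Set T), pos' b V → (∀ c : T, pos' c V → c ∈ W) → pos' b W) →
      (∀ (b : T) (V W : Set T), covT b V → pos' b W → ∃ c ∈ V, pos' c W) →
      ∀ (b : T) (V : Set T), pos' b V → posT b V)
    -- a relation s satisfying (FM1)-(FM3):
    (s : S → T → Prop)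
    (hFM1 : ∀ a : S, covS a {a' : S | ∃ b : T, s a' b})
    (hFM2 : ∀ b c : T, ∀ a : S,
      (∃ x : S, s x b ∧ covS a {x}) → (∃ y : S, s y c ∧ covS a {y}) →
      covS a {a' : S | ∃ d : T, (covT d {b} ∧ covT d {c}) ∧ s a' d})
    (hFM3 : ∀ (b : T) (V : Set T), covT b V → ∀ a : S, s a b →
      covS a {a' : S | ∃ d ∈ V, s a' d}) :
    -- the lemma: any positivity compatible with a cover is compatible with
    -- every smaller cover
    ((∀ (cov cov' : T → Set T → Prop) (pos' : T → Set T → Prop),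
      (∀ (b : T) (V : Set T), cov' b V → cov b V) →
      (∀ (b : T) (V W : Set T), cov b V → pos' b W → ∃ c ∈ V, pos' c W) →
      (∀ (b : T) (V W : Set T), cov' b V → pos' b W → ∃ c ∈ V, pos' c W)) ∧
    -- consequently s satisfies (FM4):
    (∀ (b : T) (V : Set T),
      (∃ a : S, s a b ∧ posS a {a' : S | ∀ d : T, s a' d → d ∈ V}) →
      posT b V)) := by
  constructor
  · intro cov cov' pos' hsub hcompat b V W h1 h2
    exact hcompat b V W (hsub b V h1) h2
  · intro b V hb
    -- define pos' c W := ∃ a, s a c ∧ posS a (s* W)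
    apply hTgreatest (fun c W => ∃ a : S, s a c ∧ posS a {a' : S | ∀ d : T, s a' d → d ∈ W})
    · rintro c W ⟨a, hsac, hpos⟩
      exact hScorefl a _ hpos c hsac
    · rintro c W W' ⟨a, hsac, hpos⟩ hWW'
      refine ⟨a, hsac, hScotrans a _ _ hpos ?_⟩
      intro a' ha' d hsd
      exact hWW' d ⟨a', hsd, ha'⟩
    · rintro c W W' hcov ⟨a, hsac, hpos⟩
      obtain ⟨a', ha', hpos'⟩ := hScompat a _ _ (hFM3 c W hcov a hsac) hpos
      obtain ⟨d, hdW, hsd⟩ := ha'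
      exact ⟨d, hdW, a', hsd, hpos'⟩
    · exact hb
end
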